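/- A matrix-valued Laurent series S ∈ M_N(ℂ((z))) preserves the residue symplectic form, i.e. Ω(S·f, S·h) = Ω(f, h) for all f, h ∈ 𝓗, if and only if S*(−z)·S(z) = I, equivalently (since a matrix over the field ℂ((z)) with a one-sided inverse is invertible) S(z)·S*(−z) = I. This is the characterization of the loop group elements acting on Givental's symplectic space. -/

import Mathlib

noncomputable section

/-- The substitution `z ↦ −z` on a Laurent series. -/
def LaurentSeries.negZ (s : LaurentSeries ℂ) : LaurentSeries ℂ :=
  ⟨fun n => (-1 : ℂ) ^ n * s.coeff n,
    s.isPWO_support'.mono (by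
      intro n hn
      simp only [Function.mem_support, ne_eq] at hn ⊢
      intro hc
      exact hn (by rw [hc, mul_zero]))⟩

/-- The residue symplectic form
`Ω(f, h) = ∑_{i+j=−1} (−1)^j fᵢᵀ G hⱼ` on `𝓗 = (ℂ((z)))^N`. -/
def OmegaForm (N : ℕ) (G : Matrix (Fin N) (Fin N) ℂ)
    (f h : Fin N → LaurentSeries ℂ) : ℂ :=
  ∑ᶠ i : ℤ, (-1 : ℂ) ^ (-1 - i) *
    ∑ a : Fin N, ∑ b : Fin N, (f a).coeff i * G a b * (h b).coeff (-1 - i)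

/-- A matrix-valued Laurent series acting on `𝓗` by multiplication. -/
def matAct (N : ℕ) (S : Matrix (Fin N) (Fin N) (LaurentSeries ℂ))
    (f : Fin N → LaurentSeries ℂ) : Fin N → LaurentSeries ℂ :=
  fun a => ∑ b : Fin N, S a b * f b

/-- The adjoint transpose `S*(z) = G⁻¹ S(z)ᵀ G` with respect to the pairing `G`. -/
def adjT (N : ℕ) (G : Matrix (Fin N) (Fin N) ℂ)
    (S : Matrix (Fin N) (Fin N) (LaurentSeries ℂ)) :
    Matrix (Fin N) (Fin N) (LaurentSeries ℂ) :=
  (G⁻¹).map (fun c => HahnSeries.C c) * S.transpose * G.map (fun c => HahnSeries.C c)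

open Finset

namespace LaurentSeries

@[simp] lemma negZ_coeff (s : LaurentSeries ℂ) (n : ℤ) :
    s.negZ.coeff n = (-1 : ℂ) ^ n * s.coeff n := rfl

lemma negZ_zero : (0 : LaurentSeries ℂ).negZ = 0 := by ext n; simp

lemma negZ_add (s t : LaurentSeries ℂ) : (s + t).negZ = s.negZ + t.negZ := by
  ext n; simp [mul_add]

lemma negZ_one : (1 : LaurentSeries ℂ).negZ = 1 := by
  ext n
  simp only [negZ_coeff, HahnSeries.coeff_one]
  by_cases h : n = 0 <;> simp [h]

lemma negZ_negZ (s : LaurentSeries ℂ) : s.negZ.negZ = s := by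
  ext n
  simp [negZ_coeff, ← mul_assoc, ← mul_zpow]

lemma negZ_support (s : LaurentSeries ℂ) : s.negZ.support = s.support := by
  ext n
  simp [HahnSeries.mem_support, negZ_coeff, mul_eq_zero,
    zpow_ne_zero n (by norm_num : (-1:ℂ) ≠ 0)]

lemma negZ_mul (s t : LaurentSeries ℂ) : (s * t).negZ = s.negZ * t.negZ := by
  ext n
  rw [negZ_coeff, HahnSeries.coeff_mul, HahnSeries.coeff_mul]
  have hset : Finset.addAntidiagonal s.negZ.isPWO_support t.negZ.isPWO_support n =
      Finset.addAntidiagonal s.isPWO_support t.isPWO_support n := by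
    ext ⟨i, j⟩
    simp [Finset.addAntidiagonal, Finset.mem_addAntidiagonal, negZ_support]
  rw [Finset.addAntidiagonal] at hset
  rw [hset, Finset.mul_sum]
  refine Finset.sum_congr rfl fun ⟨i, j⟩ hij => ?_
  rw [Finset.mem_addAntidiagonal] at hij
  obtain ⟨-, -, hn⟩ := hij
  simp only [negZ_coeff]
  rw [← hn, zpow_add₀ (by norm_num : (-1:ℂ) ≠ 0)]
  ring

lemma negZ_sum {α : Type*} (s : Finset α) (F : α → LaurentSeries ℂ) :
    LaurentSeries.negZ (∑ a ∈ s, F a) = ∑ a ∈ s, LaurentSeries.negZ (F a) :=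
  map_sum (AddMonoidHom.mk ⟨LaurentSeries.negZ, negZ_zero⟩ negZ_add) F s

lemma negZ_single (j : ℤ) (r : ℂ) :
    LaurentSeries.negZ (HahnSeries.single j r) = HahnSeries.single j ((-1:ℂ)^j * r) := by
  ext n
  rw [negZ_coeff]
  by_cases hn : n = j
  · subst hn; simp
  · simp [HahnSeries.coeff_single_of_ne hn]

lemma negZ_C (c : ℂ) : LaurentSeries.negZ (HahnSeries.C c) = HahnSeries.C c := by
  rw [HahnSeries.C_apply, negZ_single, zpow_zero, one_mul, ← HahnSeries.C_apply]

/-- `negZ` as a ring homomorphism. -/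
def negZHom : LaurentSeries ℂ →+* LaurentSeries ℂ where
  toFun := LaurentSeries.negZ
  map_one' := negZ_one
  map_mul' := negZ_mul
  map_zero' := negZ_zero
  map_add' := negZ_add

end LaurentSeries

lemma support_conv_subset (s t : LaurentSeries ℂ) (n : ℤ) :
    Function.support (fun i => s.coeff i * t.coeff (n - i)) ⊆
      ↑((Finset.addAntidiagonal s.isPWO_support t.isPWO_support n).image Prod.fst) := by
  intro i hi
  simp only [Function.mem_support, ne_eq, mul_eq_zero, not_or] at hi
  simp only [Finset.coe_image, Set.mem_image, Finset.mem_coe, Finset.addAntidiagonal, Finset.mem_addAntidiagonal]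
  exact ⟨(i, n - i), ⟨hi.1, hi.2, by ring⟩, rfl⟩

lemma support_conv_finite (s t : LaurentSeries ℂ) (n : ℤ) :
    (Function.support (fun i => s.coeff i * t.coeff (n - i))).Finite :=
  Set.Finite.subset (Finset.finite_toSet _) (support_conv_subset s t n)

/-- The coefficient of a product of Laurent series as a convolution `finsum`. -/
lemma mul_coeff_finsum (s t : LaurentSeries ℂ) (n : ℤ) :
    (s * t).coeff n = ∑ᶠ i : ℤ, s.coeff i * t.coeff (n - i) := by
  rw [finsum_eq_sum_of_support_subset _ (support_conv_subset s t n),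
    Finset.sum_image (by
      rintro ⟨i, j⟩ hij ⟨k, l⟩ hkl h
      simp only [Finset.mem_coe, Finset.addAntidiagonal, Finset.mem_addAntidiagonal] at hij hkl
      simp only at h
      subst h
      have : j = l := by omega
      simp [this]), HahnSeries.coeff_mul]
  refine Finset.sum_congr rfl fun ⟨i, j⟩ hij => ?_
  rw [Finset.addAntidiagonal, Finset.mem_addAntidiagonal] at hij
  have : n - i = j := by omega
  simp [this]

lemma finsum_finsetsum {α : Type*} (s : Finset α) (F : α → ℤ → ℂ)
    (hF : ∀ a ∈ s, (Function.support (F a)).Finite) :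
    ∑ᶠ i : ℤ, ∑ a ∈ s, F a i = ∑ a ∈ s, ∑ᶠ i : ℤ, F a i := by
  classical
  induction s using Finset.induction_on with
  | empty => simp
  | @insert a s' ha ih =>
    have h1 : (Function.support (F a)).Finite := hF a (Finset.mem_insert_self _ _)
    have h2 : (Function.support (fun i => ∑ b ∈ s', F b i)).Finite := by
      refine Set.Finite.subset (Set.Finite.biUnion s'.finite_toSet
        (fun b hb => hF b (Finset.mem_insert_of_mem hb))) ?_
      intro i hi
      simp only [Function.mem_support, ne_eq] at hi
      by_contra hc
      simp only [Set.mem_iUnion, Function.mem_support, not_exists] at hc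
      exact hi (Finset.sum_eq_zero fun b hb => by
        by_contra hne
        exact hc b hb hne)
    rw [Finset.sum_insert ha, ← ih (fun b hb => hF b (Finset.mem_insert_of_mem hb)),
      ← finsum_add_distrib h1 h2]
    exact finsum_congr fun i => Finset.sum_insert ha

lemma coeff_sum {α : Type*} (s : Finset α) (F : α → LaurentSeries ℂ) (n : ℤ) :
    (∑ a ∈ s, F a).coeff n = ∑ a ∈ s, (F a).coeff n :=
  map_sum (AddMonoidHom.mk ⟨fun x => x.coeff n, rfl⟩ fun _ _ => HahnSeries.coeff_add) F s

/-- `OmegaForm` is the residue (coefficient of `z⁻¹`) of `f(z)ᵀ G h(−z)`. -/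
lemma OmegaForm_eq (N : ℕ) (G : Matrix (Fin N) (Fin N) ℂ) (f h : Fin N → LaurentSeries ℂ) :
    OmegaForm N G f h
      = (∑ a : Fin N, ∑ b : Fin N, f a * (HahnSeries.C (G a b) * (h b).negZ)).coeff (-1) := by
  classical
  set F : Fin N × Fin N → ℤ → ℂ := fun p i =>
    (-1:ℂ)^(-1 - i) * ((f p.1).coeff i * G p.1 p.2 * (h p.2).coeff (-1 - i)) with hF
  have hfin : ∀ p ∈ (Finset.univ : Finset (Fin N × Fin N)),
      (Function.support (F p)).Finite := by
    intro p _
    refine (support_conv_finite (f p.1) (h p.2) (-1)).subset ?_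
    intro i hi
    simp only [Function.mem_support, ne_eq, hF] at hi ⊢
    intro hc
    exact hi (by
      rw [show (-1 : ℤ) - i = -1 - i from rfl] at hc
      rw [mul_comm ((f p.1).coeff i) (G p.1 p.2), mul_assoc, hc, mul_zero, mul_zero])
  calc OmegaForm N G f h = ∑ᶠ i : ℤ, ∑ p : Fin N × Fin N, F p i := by
        refine finsum_congr fun i => ?_
        rw [Fintype.sum_prod_type]
        rw [Finset.mul_sum]
        exact Finset.sum_congr rfl fun a _ => by rw [Finset.mul_sum]
    _ = ∑ p : Fin N × Fin N, ∑ᶠ i : ℤ, F p i := finsum_finsetsum _ _ hfin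
    _ = _ := by
        simp only [coeff_sum]
        rw [Fintype.sum_prod_type]
        refine Finset.sum_congr rfl fun a _ => Finset.sum_congr rfl fun b _ => ?_
        rw [mul_coeff_finsum]
        refine finsum_congr fun i => ?_
        rw [HahnSeries.C_apply, HahnSeries.coeff_single_zero_mul]
        simp only [hF, LaurentSeries.negZ_coeff]
        ring

/-- A matrix over the Laurent series is determined by the residue pairings it induces. -/
lemma matrix_eq_of_pairing (N : ℕ) (M M' : Matrix (Fin N) (Fin N) (LaurentSeries ℂ))
    (H : ∀ f h : Fin N → LaurentSeries ℂ,
      (∑ c : Fin N, ∑ d : Fin N, f c * (M c d * (h d).negZ)).coeff (-1) =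
      (∑ c : Fin N, ∑ d : Fin N, f c * (M' c d * (h d).negZ)).coeff (-1)) : M = M' := by
  classical
  ext c d k
  set j : ℤ := -1 - k with hj
  have := H (fun c' => if c' = c then 1 else 0)
    (fun d' => if d' = d then HahnSeries.single j 1 else 0)
  simp only [ite_mul, one_mul, zero_mul, apply_ite LaurentSeries.negZ, LaurentSeries.negZ_zero,
    mul_ite, mul_zero, Finset.sum_ite_eq', Finset.mem_univ, if_true] at this
  rw [LaurentSeries.negZ_single, mul_one] at this
  have hsplit : (-1 : ℤ) = k + j := by omega
  rw [hsplit, HahnSeries.coeff_mul_single_add, HahnSeries.coeff_mul_single_add] at this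
  exact mul_right_cancel₀ (zpow_ne_zero j (by norm_num : (-1:ℂ) ≠ 0)) this

lemma sum4_comm {β : Type*} [AddCommMonoid β] {n : ℕ}
    (t : Fin n → Fin n → Fin n → Fin n → β) :
    ∑ a, ∑ b, ∑ c, ∑ d, t a b c d = ∑ c, ∑ d, ∑ a, ∑ b, t a b c d := by
  have := Finset.sum_comm (s := (univ : Finset (Fin n × Fin n))) (t := univ)
    (f := fun (p q : Fin n × Fin n) => t p.1 p.2 q.1 q.2)
  simpa only [Fintype.sum_prod_type] using this

/-- The pairing of `S·f` and `S·h` is the pairing of `f` and `h` against `Sᵀ G S(−z)`. -/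
lemma pairing_matAct (N : ℕ) (G : Matrix (Fin N) (Fin N) ℂ)
    (S : Matrix (Fin N) (Fin N) (LaurentSeries ℂ)) (f h : Fin N → LaurentSeries ℂ) :
    ∑ a : Fin N, ∑ b : Fin N,
        (matAct N S f a) * (HahnSeries.C (G a b) * LaurentSeries.negZ (matAct N S h b))
      = ∑ c : Fin N, ∑ d : Fin N, f c *
          ((S.transpose * G.map (fun x => HahnSeries.C x) * S.map LaurentSeries.negZ
              : Matrix (Fin N) (Fin N) (LaurentSeries ℂ)) c d
            * LaurentSeries.negZ (h d)) := by
  have hM : ∀ c d, (S.transpose * G.map (fun x => HahnSeries.C x) * S.map LaurentSeries.negZ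
        : Matrix (Fin N) (Fin N) (LaurentSeries ℂ)) c d
      = ∑ a : Fin N, ∑ b : Fin N,
          S a c * HahnSeries.C (G a b) * LaurentSeries.negZ (S b d) := by
    intro c d
    rw [Matrix.mul_apply]
    simp only [Matrix.mul_apply, Finset.sum_mul, Matrix.transpose_apply, Matrix.map_apply]
    rw [Finset.sum_comm]
  simp only [matAct, LaurentSeries.negZ_sum, LaurentSeries.negZ_mul, hM]
  simp only [Finset.sum_mul, Finset.mul_sum]
  rw [sum4_comm, Finset.sum_comm]
  refine Finset.sum_congr rfl fun c _ => Finset.sum_congr rfl fun d _ =>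
    Finset.sum_congr rfl fun a _ => Finset.sum_congr rfl fun b _ => by ring

section MatrixLemmas

variable {N : ℕ}

lemma matrix_map_negZ_mul (A B : Matrix (Fin N) (Fin N) (LaurentSeries ℂ)) :
    (A * B).map LaurentSeries.negZ = A.map LaurentSeries.negZ * B.map LaurentSeries.negZ :=
  Matrix.map_mul (f := LaurentSeries.negZHom)

lemma matrix_map_C_mul (A B : Matrix (Fin N) (Fin N) ℂ) :
    ((A * B).map (fun c => HahnSeries.C c) : Matrix (Fin N) (Fin N) (LaurentSeries ℂ))
      = A.map (fun c => HahnSeries.C c) * B.map (fun c => HahnSeries.C c) :=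
  Matrix.map_mul (f := (HahnSeries.C (Γ := ℤ) (R := ℂ)))

lemma matrix_map_C_negZ (A : Matrix (Fin N) (Fin N) ℂ) :
    (A.map (fun c => HahnSeries.C c)).map LaurentSeries.negZ
      = A.map (fun c => HahnSeries.C c) := by
  refine Matrix.ext fun i j => ?_
  simp only [Matrix.map_apply]
  exact LaurentSeries.negZ_C _

lemma matrix_map_negZ_negZ (A : Matrix (Fin N) (Fin N) (LaurentSeries ℂ)) :
    (A.map LaurentSeries.negZ).map LaurentSeries.negZ = A := by
  ext i j
  simp [Matrix.map_apply, LaurentSeries.negZ_negZ]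

lemma adjT_map_negZ (N : ℕ) (G : Matrix (Fin N) (Fin N) ℂ)
    (S : Matrix (Fin N) (Fin N) (LaurentSeries ℂ)) :
    (adjT N G S).map LaurentSeries.negZ
      = (G⁻¹).map (fun c => HahnSeries.C c) * S.transpose.map LaurentSeries.negZ
          * G.map (fun c => HahnSeries.C c) := by
  rw [adjT, matrix_map_negZ_mul, matrix_map_negZ_mul, matrix_map_C_negZ, matrix_map_C_negZ]

lemma conj_eq_iff (N : ℕ) (G : Matrix (Fin N) (Fin N) ℂ) (hGinv : IsUnit G.det)
    (S : Matrix (Fin N) (Fin N) (LaurentSeries ℂ)) :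
    (S.transpose * G.map (fun c => HahnSeries.C c) * S.map LaurentSeries.negZ
        = G.map (fun c => HahnSeries.C c))
      ↔ (adjT N G S).map LaurentSeries.negZ * S = 1 := by
  have hmapone : (1 : Matrix (Fin N) (Fin N) ℂ).map (fun c => HahnSeries.C c)
      = (1 : Matrix (Fin N) (Fin N) (LaurentSeries ℂ)) :=
    Matrix.map_one _ (map_zero (HahnSeries.C (Γ := ℤ) (R := ℂ)))
      (map_one (HahnSeries.C (Γ := ℤ) (R := ℂ)))
  have hGG' : (G.map (fun c => HahnSeries.C c) : Matrix (Fin N) (Fin N) (LaurentSeries ℂ))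
      * (G⁻¹).map (fun c => HahnSeries.C c) = 1 := by
    rw [← matrix_map_C_mul, Matrix.mul_nonsing_inv G hGinv, hmapone]
  have hG'G : ((G⁻¹).map (fun c => HahnSeries.C c) : Matrix (Fin N) (Fin N) (LaurentSeries ℂ))
      * G.map (fun c => HahnSeries.C c) = 1 := by
    rw [← matrix_map_C_mul, Matrix.nonsing_inv_mul G hGinv, hmapone]
  have hflip : (S.transpose * G.map (fun c => HahnSeries.C c) * S.map LaurentSeries.negZ
        = (G.map (fun c => HahnSeries.C c) : Matrix (Fin N) (Fin N) (LaurentSeries ℂ)))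
      ↔ S.transpose.map LaurentSeries.negZ * G.map (fun c => HahnSeries.C c) * S
        = G.map (fun c => HahnSeries.C c) := by
    constructor
    · intro hM
      have := congrArg
        (fun A : Matrix (Fin N) (Fin N) (LaurentSeries ℂ) => A.map LaurentSeries.negZ) hM
      simpa only [matrix_map_negZ_mul, matrix_map_negZ_negZ, matrix_map_C_negZ] using this
    · intro hM
      have := congrArg
        (fun A : Matrix (Fin N) (Fin N) (LaurentSeries ℂ) => A.map LaurentSeries.negZ) hM
      simpa only [matrix_map_negZ_mul, matrix_map_negZ_negZ, matrix_map_C_negZ] using this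
  rw [hflip]
  constructor
  · intro hE
    rw [adjT_map_negZ, mul_assoc, mul_assoc,
      ← mul_assoc (S.transpose.map LaurentSeries.negZ), hE, hG'G]
  · intro hE
    have h1 : G.map (fun c => HahnSeries.C c) * ((adjT N G S).map LaurentSeries.negZ * S)
        = G.map (fun c => HahnSeries.C c) := by rw [hE, mul_one]
    calc S.transpose.map LaurentSeries.negZ * G.map (fun c => HahnSeries.C c) * S
        = (G.map (fun c => HahnSeries.C c) * (G⁻¹).map (fun c => HahnSeries.C c)) *
            (S.transpose.map LaurentSeries.negZ * G.map (fun c => HahnSeries.C c) * S) := by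
          rw [hGG', one_mul]
      _ = G.map (fun c => HahnSeries.C c) * ((adjT N G S).map LaurentSeries.negZ * S) := by
          rw [adjT_map_negZ]
          simp only [Matrix.mul_assoc]
      _ = G.map (fun c => HahnSeries.C c) := h1

end MatrixLemmas

/-- A matrix-valued Laurent series `S` preserves the residue symplectic form iff
`S*(−z)·S(z) = I`, equivalently iff `S(z)·S*(−z) = I`: the characterization of
loop group elements acting on Givental's symplectic space. -/
theorem loop_group_element_iff (N : ℕ) (hN : 1 ≤ N)
    (G : Matrix (Fin N) (Fin N) ℂ) (hGsymm : G.transpose = G) (hGinv : IsUnit G.det)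
    (S : Matrix (Fin N) (Fin N) (LaurentSeries ℂ)) :
    ((∀ f h : Fin N → LaurentSeries ℂ,
        OmegaForm N G (matAct N S f) (matAct N S h) = OmegaForm N G f h) ↔
      (adjT N G S).map LaurentSeries.negZ * S = 1) ∧
    ((adjT N G S).map LaurentSeries.negZ * S = 1 ↔
      S * (adjT N G S).map LaurentSeries.negZ = 1) := by
  classical
  have hΩ1 : ∀ f h : Fin N → LaurentSeries ℂ,
      OmegaForm N G (matAct N S f) (matAct N S h)
        = (∑ c : Fin N, ∑ d : Fin N, f c *
            ((S.transpose * G.map (fun x => HahnSeries.C x) * S.map LaurentSeries.negZ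
                : Matrix (Fin N) (Fin N) (LaurentSeries ℂ)) c d
              * LaurentSeries.negZ (h d))).coeff (-1) := by
    intro f h
    rw [OmegaForm_eq, pairing_matAct]
  have hΩ2 : ∀ f h : Fin N → LaurentSeries ℂ,
      OmegaForm N G f h
        = (∑ c : Fin N, ∑ d : Fin N,
            f c * ((G.map (fun x => HahnSeries.C x)
                : Matrix (Fin N) (Fin N) (LaurentSeries ℂ)) c d
              * LaurentSeries.negZ (h d))).coeff (-1) := by
    intro f h
    rw [OmegaForm_eq]
    simp only [Matrix.map_apply]
  refine ⟨?_, mul_eq_one_comm⟩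
  rw [← conj_eq_iff N G hGinv S]
  constructor
  · intro H
    refine matrix_eq_of_pairing N _ _ fun f h => ?_
    rw [← hΩ1 f h, H f h, hΩ2]
  · intro H f h
    rw [hΩ1 f h, H, ← hΩ2]

end
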